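/- Let k be a real (or complex) number and let X₁, Y₁ be complex numbers with X₁ ≠ 1 satisfying Y₁^2 = (k^2+k)X₁^6 + (-2k^2+5k+4)X₁^4 + (k^2-5k+8)X₁^2 + (-k+4). Set x = (X₁+1)/(X₁-1) and y = (2X₁Y₁ - (2k+1)X₁^4 + (2k-6)X₁^2 - 1)/(X₁-1)^4. Then Q_k(x,y) = 0, where Q_k(x,y) = y^2 + (x^4 + k x^3 + 2k x^2 + k x + 1)y + x^4. -/

import Mathlib

set_option maxHeartbeats 1000000 in
/-- The birational substitution `x = (X₁+1)/(X₁-1)`,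
`y = (2X₁Y₁ - (2k+1)X₁⁴ + (2k-6)X₁² - 1)/(X₁-1)⁴` maps the curve
`Z_k' : Y₁² = (k²+k)X₁⁶ + (-2k²+5k+4)X₁⁴ + (k²-5k+8)X₁² + (-k+4)` to the genus 2 curve
`Q_k(x, y) = y² + (x⁴ + kx³ + 2kx² + kx + 1)y + x⁴ = 0`. -/
theorem Zk_prime_maps_to_Qk (k X₁ Y₁ : ℂ) (hX₁ : X₁ ≠ 1)
    (hZ : Y₁ ^ 2 = (k ^ 2 + k) * X₁ ^ 6 + (-2 * k ^ 2 + 5 * k + 4) * X₁ ^ 4 +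
      (k ^ 2 - 5 * k + 8) * X₁ ^ 2 + (-k + 4)) :
    ((2 * X₁ * Y₁ - (2 * k + 1) * X₁ ^ 4 + (2 * k - 6) * X₁ ^ 2 - 1) / (X₁ - 1) ^ 4) ^ 2 +
      (((X₁ + 1) / (X₁ - 1)) ^ 4 + k * ((X₁ + 1) / (X₁ - 1)) ^ 3 +
        2 * k * ((X₁ + 1) / (X₁ - 1)) ^ 2 + k * ((X₁ + 1) / (X₁ - 1)) + 1) *
        ((2 * X₁ * Y₁ - (2 * k + 1) * X₁ ^ 4 + (2 * k - 6) * X₁ ^ 2 - 1) / (X₁ - 1) ^ 4) +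
      ((X₁ + 1) / (X₁ - 1)) ^ 4 = 0 := by
  have h : X₁ - 1 ≠ 0 := sub_ne_zero.mpr hX₁
  set N := 2 * X₁ * Y₁ - (2 * k + 1) * X₁ ^ 4 + (2 * k - 6) * X₁ ^ 2 - 1 with hN
  set M := (X₁ + 1) ^ 4 + k * (X₁ + 1) ^ 3 * (X₁ - 1) + 2 * k * (X₁ + 1) ^ 2 * (X₁ - 1) ^ 2 +
      k * (X₁ + 1) * (X₁ - 1) ^ 3 + (X₁ - 1) ^ 4 with hM
  have hb : ((X₁ + 1) / (X₁ - 1)) ^ 4 + k * ((X₁ + 1) / (X₁ - 1)) ^ 3 +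
      2 * k * ((X₁ + 1) / (X₁ - 1)) ^ 2 + k * ((X₁ + 1) / (X₁ - 1)) + 1 = M / (X₁ - 1) ^ 4 := by
    have t4 : ((X₁ + 1) / (X₁ - 1)) ^ 4 = (X₁ + 1) ^ 4 / (X₁ - 1) ^ 4 := div_pow _ _ _
    have t3 : k * ((X₁ + 1) / (X₁ - 1)) ^ 3 = k * (X₁ + 1) ^ 3 * (X₁ - 1) / (X₁ - 1) ^ 4 := by
      rw [div_pow, mul_div_assoc', div_eq_div_iff (pow_ne_zero 3 h) (pow_ne_zero 4 h)]
      ring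
    have t2 : 2 * k * ((X₁ + 1) / (X₁ - 1)) ^ 2 =
        2 * k * (X₁ + 1) ^ 2 * (X₁ - 1) ^ 2 / (X₁ - 1) ^ 4 := by
      rw [div_pow, mul_div_assoc', div_eq_div_iff (pow_ne_zero 2 h) (pow_ne_zero 4 h)]
      ring
    have t1 : k * ((X₁ + 1) / (X₁ - 1)) = k * (X₁ + 1) * (X₁ - 1) ^ 3 / (X₁ - 1) ^ 4 := by
      rw [mul_div_assoc', div_eq_div_iff h (pow_ne_zero 4 h)]
      ring
    have t0 : (1 : ℂ) = (X₁ - 1) ^ 4 / (X₁ - 1) ^ 4 := (div_self (pow_ne_zero 4 h)).symm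
    rw [t4, t3, t2, t1]
    nth_rewrite 12 [t0]
    rw [← add_div, ← add_div, ← add_div, ← add_div, hM]
  have hsq : (N / (X₁ - 1) ^ 4) ^ 2 = N ^ 2 / (X₁ - 1) ^ 8 := by
    rw [div_pow, ← pow_mul]
  have hx4 : ((X₁ + 1) / (X₁ - 1)) ^ 4 = (X₁ + 1) ^ 4 * (X₁ - 1) ^ 4 / (X₁ - 1) ^ 8 := by
    rw [div_pow, div_eq_div_iff (pow_ne_zero 4 h) (pow_ne_zero 8 h)]
    ring
  have hprod : M / (X₁ - 1) ^ 4 * (N / (X₁ - 1) ^ 4) = M * N / (X₁ - 1) ^ 8 := by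
    rw [div_mul_div_comm, ← pow_add]
  have key : N ^ 2 + M * N + (X₁ + 1) ^ 4 * (X₁ - 1) ^ 4 = 0 := by
    rw [hN, hM]
    linear_combination (4 * X₁ ^ 2) * hZ
  rw [hb, hsq, hx4, hprod, ← add_div, ← add_div, key, zero_div]
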